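/- Let u: ℤ → A be a bi-infinite sequence over a finite alphabet with |A| = d. If for some P ≥ 1 the number of distinct factors of u of length P is strictly less than P, then u is periodic. -/

import Mathlib

namespace Stmt15Aux

set_option linter.unusedSectionVars false

variable {A : Type} [Fintype A]

/-- window of length `n` starting at `i` -/
def win (u : ℤ → A) (n : ℕ) (i : ℤ) : Fin n → A := fun j => u (i + (j : ℕ))

def pre (n : ℕ) (w : Fin (n+1) → A) : Fin n → A := fun j => w j.castSucc

def suf (n : ℕ) (w : Fin (n+1) → A) : Fin n → A := fun j => w j.succ

lemma pre_win (u : ℤ → A) (n : ℕ) (i : ℤ) : pre n (win u (n+1) i) = win u n i := by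
  funext j; simp [pre, win]

lemma suf_win (u : ℤ → A) (n : ℕ) (i : ℤ) : suf n (win u (n+1) i) = win u n (i+1) := by
  funext j
  show u (i + ((j : ℕ) + 1 : ℕ)) = u (i + 1 + (j : ℕ))
  congr 1
  push_cast
  ring

lemma image_pre (u : ℤ → A) (n : ℕ) :
    pre n '' Set.range (win u (n+1)) = Set.range (win u n) := by
  rw [← Set.range_comp]
  exact congrArg Set.range (funext fun i => pre_win u n i)

lemma image_suf (u : ℤ → A) (n : ℕ) :
    suf n '' Set.range (win u (n+1)) = Set.range (win u n) := by
  rw [← Set.range_comp]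
  ext w
  constructor
  · rintro ⟨i, rfl⟩
    exact ⟨i + 1, (suf_win u n i).symm⟩
  · rintro ⟨i, rfl⟩
    exact ⟨i - 1, by rw [Function.comp_apply, suf_win, sub_add_cancel]⟩

lemma mono (u : ℤ → A) (n : ℕ) :
    (Set.range (win u n)).ncard ≤ (Set.range (win u (n+1))).ncard := by
  rw [← image_pre]
  exact Set.ncard_image_le (Set.toFinite _)

lemma step (u : ℤ → A) (n : ℕ)
    (hcard : (Set.range (win u (n+1))).ncard = (Set.range (win u n)).ncard)
    (i j : ℤ) (h : win u n i = win u n j) :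
    win u n (i+1) = win u n (j+1) ∧ win u n (i-1) = win u n (j-1) := by
  have hpre : Set.InjOn (pre n) (Set.range (win u (n+1))) :=
    Set.injOn_of_ncard_image_eq (by rw [image_pre, hcard]) (Set.toFinite _)
  have hsuf : Set.InjOn (suf n) (Set.range (win u (n+1))) :=
    Set.injOn_of_ncard_image_eq (by rw [image_suf, hcard]) (Set.toFinite _)
  constructor
  · have h2 : win u (n+1) i = win u (n+1) j := by
      apply hpre (Set.mem_range_self i) (Set.mem_range_self j)
      rw [pre_win, pre_win, h]
    have := congrArg (suf n) h2
    rwa [suf_win, suf_win] at this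
  · have h2 : win u (n+1) (i-1) = win u (n+1) (j-1) := by
      apply hsuf (Set.mem_range_self _) (Set.mem_range_self _)
      rw [suf_win, suf_win, sub_add_cancel, sub_add_cancel, h]
    have := congrArg (pre n) h2
    rwa [pre_win, pre_win] at this

lemma shift (u : ℤ → A) (n : ℕ)
    (hcard : (Set.range (win u (n+1))).ncard = (Set.range (win u n)).ncard)
    (i j : ℤ) (h : win u n i = win u n j) :
    ∀ m : ℤ, win u n (i + m) = win u n (j + m) := by
  intro m
  induction m using Int.induction_on with
  | zero => simpa using h
  | succ k ih =>
      have := (step u n hcard _ _ ih).1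
      rw [show i + ((k : ℤ) + 1) = i + (k : ℤ) + 1 by ring,
          show j + ((k : ℤ) + 1) = j + (k : ℤ) + 1 by ring]
      exact this
  | pred k ih =>
      have := (step u n hcard _ _ ih).2
      rw [show i + (-(k : ℤ) - 1) = i + -(k : ℤ) - 1 by ring,
          show j + (-(k : ℤ) - 1) = j + -(k : ℤ) - 1 by ring]
      exact this

end Stmt15Aux

open Stmt15Aux in
/-- two-sided Morse–Hedlund: If a bi-infinite sequence over a
finite alphabet of cardinality `d` has fewer than `P` distinct factors of some
length `P ≥ 1`, then it is periodic. -/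
theorem stmt_15 {A : Type} [Fintype A] (d : ℕ) (hd : Fintype.card A = d)
    (u : ℤ → A) (P : ℕ) (hP : 1 ≤ P)
    (hcomp : (Set.range fun i : ℤ => fun j : Fin P => u (i + (j : ℕ))).ncard < P) :
    ∃ T : ℤ, 1 ≤ T ∧ ∀ n : ℤ, u (n + T) = u n := by
  have hcomp' : (Set.range (win u P)).ncard < P := hcomp
  have hpos : ∀ n : ℕ, 1 ≤ n → 1 ≤ (Set.range (win u n)).ncard := by
    intro n hn
    have hne : (Set.range (win u n)).Nonempty := ⟨win u n 0, Set.mem_range_self 0⟩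
    have := (Set.ncard_pos (Set.toFinite _)).mpr hne
    omega
  have hexists : ∃ n : ℕ, 1 ≤ n ∧
      (Set.range (win u (n+1))).ncard = (Set.range (win u n)).ncard := by
    by_contra hcon
    push_neg at hcon
    have hstrict : ∀ n : ℕ, 1 ≤ n →
        (Set.range (win u n)).ncard < (Set.range (win u (n+1))).ncard := by
      intro n hn
      have h1 := mono u n
      have h2 := hcon n hn
      omega
    have hgrow : ∀ n : ℕ, 1 ≤ n → n ≤ (Set.range (win u n)).ncard := by
      intro n
      induction n with
      | zero => omega
      | succ k ih =>
          intro _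
          by_cases hk : 1 ≤ k
          · have h1 := hstrict k hk
            have h2 := ih hk
            omega
          · have hk0 : k = 0 := by omega
            subst hk0
            exact hpos 1 le_rfl
    have hfin := hgrow P hP
    omega
  obtain ⟨n, hn1, hcard⟩ := hexists
  have main : ∀ a b : ℤ, a < b → win u n a = win u n b →
      ∃ T : ℤ, 1 ≤ T ∧ ∀ m : ℤ, u (m + T) = u m := by
    intro a b hab hfab
    refine ⟨b - a, by omega, ?_⟩
    intro m
    have key := shift u n hcard a b hfab (m - a)
    rw [show a + (m - a) = m by ring, show b + (m - a) = m + (b - a) by ring] at key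
    have := congrFun key ⟨0, hn1⟩
    simpa [win] using this.symm
  have hcardlt : Fintype.card (Fin n → A) <
      Fintype.card (Fin (Fintype.card (Fin n → A) + 1)) := by simp
  obtain ⟨k, l, hkl, hfkl⟩ := Fintype.exists_ne_map_eq_of_card_lt
    (fun k : Fin (Fintype.card (Fin n → A) + 1) => win u n ((k : ℕ) : ℤ)) hcardlt
  rcases lt_or_gt_of_ne hkl with hlt | hlt
  · have hnat : (k : ℕ) < (l : ℕ) := hlt
    exact main _ _ (by exact_mod_cast hnat) hfkl
  · have hnat : (l : ℕ) < (k : ℕ) := hlt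
    exact main _ _ (by exact_mod_cast hnat) hfkl.symm
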